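/- For κ > 0, a ≥ 0, k > 0, and q ∈ ℝ, the Fourier transform of the Debye–Hückel screening cloud evaluates exactly: −(qκ² e^{κa}/(2(1+κa))) ∫_a^∞ ∫_{-1}^1 r e^{-κr} cos(krz) dz dr = −(q/(1+κa))·[(κ/k) sin(ka) + cos(ka)]/(1 + k²/κ²). -/

import Mathlib

open Real MeasureTheory Set Filter

lemma inner_cos (c : ℝ) (hc : c ≠ 0) :
    ∫ z in (-1:ℝ)..1, Real.cos (c * z) = 2 * Real.sin c / c := by
  rw [intervalIntegral.integral_comp_mul_left (fun x => Real.cos x) hc,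
    integral_cos, mul_one, mul_neg_one, Real.sin_neg, smul_eq_mul]
  field_simp
  ring

lemma key_int (κ k a : ℝ) (hκ : 0 < κ) :
    ∫ r in Set.Ioi a, Real.exp (-(κ * r)) * Real.sin (k * r)
      = Real.exp (-(κ * a)) * (κ * Real.sin (k * a) + k * Real.cos (k * a)) / (κ ^ 2 + k ^ 2) := by
  set c := κ ^ 2 + k ^ 2 with hc
  have hcpos : 0 < c := by positivity
  set F : ℝ → ℝ := fun x =>
    -(Real.exp (-(κ * x)) * (κ * Real.sin (k * x) + k * Real.cos (k * x)) / c) with hF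
  have hderiv : ∀ x ∈ Set.Ici a, HasDerivAt F (Real.exp (-(κ * x)) * Real.sin (k * x)) x := by
    intro x _
    have h1 : HasDerivAt (fun x => Real.exp (-(κ * x))) (-κ * Real.exp (-(κ * x))) x := by
      have := (Real.hasDerivAt_exp (-(κ * x))).comp x
        (((hasDerivAt_id x).const_mul κ).neg)
      simpa [mul_comm, Function.comp_def] using this
    have hs : HasDerivAt (fun x => Real.sin (k * x)) (k * Real.cos (k * x)) x := by
      have := (Real.hasDerivAt_sin (k * x)).comp x ((hasDerivAt_id x).const_mul k)
      simpa [mul_comm, Function.comp_def] using this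
    have hcc : HasDerivAt (fun x => Real.cos (k * x)) (-(k * Real.sin (k * x))) x := by
      have := (Real.hasDerivAt_cos (k * x)).comp x ((hasDerivAt_id x).const_mul k)
      simpa [mul_comm, Function.comp_def] using this
    have h2 : HasDerivAt (fun x => κ * Real.sin (k * x) + k * Real.cos (k * x))
        (κ * (k * Real.cos (k * x)) + k * (-(k * Real.sin (k * x)))) x :=
      (hs.const_mul κ).add (hcc.const_mul k)
    have := ((h1.mul h2).div_const c).neg
    refine this.congr_deriv ?_
    have hc0 : c ≠ 0 := hcpos.ne'
    rw [neg_div', div_eq_iff hc0, hc]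
    ring
  have hint : IntegrableOn (fun r => Real.exp (-(κ * r)) * Real.sin (k * r)) (Set.Ioi a) := by
    refine ((exp_neg_integrableOn_Ioi a hκ).mono' ?_ ?_)
    · exact (Continuous.mul (by continuity) (by continuity)).aestronglyMeasurable
    · filter_upwards with x
      rw [norm_mul]
      calc ‖Real.exp (-(κ * x))‖ * ‖Real.sin (k * x)‖
          ≤ ‖Real.exp (-(κ * x))‖ * 1 := by
            gcongr; exact abs_sin_le_one _
        _ = Real.exp (-κ * x) := by
            rw [mul_one, Real.norm_eq_abs, abs_of_pos (Real.exp_pos _), neg_mul]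
  have hexp : Tendsto (fun x => Real.exp (-(κ * x))) atTop (nhds 0) := by
    have h1 : Tendsto (fun x : ℝ => κ * x) atTop atTop :=
      Tendsto.const_mul_atTop hκ tendsto_id
    exact (Real.tendsto_exp_neg_atTop_nhds_zero).comp h1
  have htend : Tendsto F atTop (nhds 0) := by
    have hb : ∀ x, ‖F x‖ ≤ Real.exp (-(κ * x)) * ((κ + |k|) / c) := by
      intro x
      have h1 : |κ * Real.sin (k * x) + k * Real.cos (k * x)| ≤ κ + |k| := by
        calc |κ * Real.sin (k * x) + k * Real.cos (k * x)|
            ≤ |κ * Real.sin (k * x)| + |k * Real.cos (k * x)| := abs_add_le _ _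
          _ ≤ |κ| * 1 + |k| * 1 := by
              rw [abs_mul, abs_mul]; gcongr
              exacts [abs_sin_le_one _, abs_cos_le_one _]
          _ = κ + |k| := by rw [abs_of_pos hκ]; ring
      have : ‖F x‖ = Real.exp (-(κ * x)) * |κ * Real.sin (k * x) + k * Real.cos (k * x)| / c := by
        rw [hF]
        simp only [norm_neg, Real.norm_eq_abs, abs_div, abs_mul,
          abs_of_pos (Real.exp_pos _), abs_of_pos hcpos]
      rw [this, div_eq_mul_inv, mul_assoc, div_eq_mul_inv]
      gcongr
    have hlim : Tendsto (fun x => Real.exp (-(κ * x)) * ((κ + |k|) / c)) atTop (nhds 0) := by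
      simpa using hexp.mul_const ((κ + |k|) / c)
    exact squeeze_zero_norm hb hlim
  have := integral_Ioi_of_hasDerivAt_of_tendsto' hderiv hint htend
  rw [this, hF]
  simp only
  ring

/-- exact evaluation of the Fourier transform of the Debye–Hückel
screening cloud: for `κ > 0`, `a ≥ 0`, `k > 0`, `q ∈ ℝ`,
`−(qκ² e^{κa}/(2(1+κa))) ∫_a^∞ ∫_{-1}^1 r e^{-κr} cos(krz) dz dr
  = −(q/(1+κa))·[(κ/k) sin(ka) + cos(ka)]/(1 + k²/κ²)`. -/
theorem dh_fourier_transform (κ a k q : ℝ) (hκ : 0 < κ) (ha : 0 ≤ a) (hk : 0 < k) :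
    -(q * κ ^ 2 * Real.exp (κ * a) / (2 * (1 + κ * a)))
        * ∫ r in Set.Ioi a, ∫ z in (-1 : ℝ)..1, r * Real.exp (-(κ * r)) * Real.cos (k * r * z)
      = -(q / (1 + κ * a)) * ((κ / k) * Real.sin (k * a) + Real.cos (k * a))
          / (1 + k ^ 2 / κ ^ 2) := by
  have hcongr : ∫ r in Set.Ioi a, ∫ z in (-1 : ℝ)..1, r * Real.exp (-(κ * r)) * Real.cos (k * r * z)
      = ∫ r in Set.Ioi a, (2 / k) * (Real.exp (-(κ * r)) * Real.sin (k * r)) := by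
    apply setIntegral_congr_fun measurableSet_Ioi
    intro r hr
    have hr0 : 0 < r := lt_of_le_of_lt ha hr
    have hkr : k * r ≠ 0 := by positivity
    show (∫ z in (-1:ℝ)..1, r * Real.exp (-(κ * r)) * Real.cos (k * r * z)) = _
    have : ∀ z : ℝ, r * Real.exp (-(κ * r)) * Real.cos (k * r * z)
        = r * Real.exp (-(κ * r)) * Real.cos ((k * r) * z) := fun z => by ring_nf
    rw [intervalIntegral.integral_const_mul, inner_cos (k * r) hkr]
    field_simp
  rw [hcongr, integral_const_mul, key_int κ k a hκ]
  have hE : Real.exp (-(κ * a)) = (Real.exp (κ * a))⁻¹ := by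
    rw [← Real.exp_neg]
  rw [hE]
  have h1a : (0:ℝ) < 1 + κ * a := by positivity
  have hc : (0:ℝ) < κ ^ 2 + k ^ 2 := by positivity
  have hEp := (Real.exp_pos (κ * a)).ne'
  field_simp
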